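/- Let R be a commutative ring without zero divisors equipped with a ring homomorphism ε_R : R → ℤ and an involutive endomorphism, let G ⊆ R^× be a subgroup with ε_R(G) = {1}, and let Q be the fraction field of R. Let A be a group, φ : A → G a group homomorphism inducing φ_Q : ℤ[A] → Q, and let (C, ∂) be a bounded chain complex of finitely generated free ℤ[A]-modules with chosen bases such that ℤ ⊗_{ℤ[A]} C (via the augmentation ℤ[A] → ℤ) is acyclic. Then Q ⊗_{ℤ[A]} C is acyclic. -/

import Mathlib

open Module Submodule Matrix

section FieldHelpers

variable {K : Type*} [Field K]

lemma exists_indep_select {ι : Type*} [Fintype ι] {V : Type*} [AddCommGroup V] [Module K V]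
    (f : ι → V) (r : ℕ) (h : r ≤ finrank K (span K (Set.range f))) :
    ∃ g : Fin r → ι, LinearIndependent K (fun i => f (g i)) := by
  obtain ⟨b, hbs, hspan, hli⟩ := exists_linearIndependent K (Set.range f)
  have hbfin : b.Finite := (Set.finite_range f).subset hbs
  haveI := hbfin.fintype
  have hcard : r ≤ Fintype.card b := by
    have h1 := finrank_span_set_eq_card hli
    rw [hspan] at h1
    rw [h1, Set.toFinset_card] at h
    exact h
  obtain ⟨e⟩ : Nonempty (Fin r ↪ b) :=
    Function.Embedding.nonempty_iff_card_le.mpr (by simpa using hcard)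
  have hmem : ∀ i : Fin r, ∃ j, f j = ((e i : V)) := fun i => hbs (e i).2
  choose g hg using hmem
  refine ⟨g, ?_⟩
  have heq : (fun i => f (g i)) = fun i => ((e i : V)) := funext hg
  rw [heq]
  exact hli.comp e e.injective

lemma exists_minor_of_le_rank {a b r : ℕ} (M : Matrix (Fin a) (Fin b) K) (h : r ≤ M.rank) :
    ∃ (rows : Fin r → Fin a) (cols : Fin r → Fin b), (M.submatrix rows cols).det ≠ 0 := by
  rw [Matrix.rank_eq_finrank_span_cols] at h
  obtain ⟨cols, hcols⟩ := exists_indep_select Mᵀ r h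
  set B : Matrix (Fin a) (Fin r) K := M.submatrix id cols with hB
  have hBt : LinearIndependent K (fun i => Bᵀ i) := hcols
  have hrankB : B.rank = r := by
    have h1 := (show LinearIndependent K Bᵀ.row from hBt).rank_matrix
    rw [Matrix.rank_transpose] at h1
    simpa using h1
  have h2 : r ≤ finrank K (span K (Set.range B)) := by
    have h3 := Matrix.rank_eq_finrank_span_row B
    rw [hrankB] at h3
    exact h3.le
  obtain ⟨rows, hrows⟩ := exists_indep_select B r h2
  refine ⟨rows, cols, ?_⟩
  have hind : LinearIndependent K (fun i => (M.submatrix rows cols) i) := hrows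
  have hunit := Matrix.linearIndependent_rows_iff_isUnit.mp hind
  rw [Matrix.isUnit_iff_isUnit_det] at hunit
  exact hunit.ne_zero

lemma rank_submatrix_col_le {a b r : ℕ} (M : Matrix (Fin a) (Fin b) K) (cols : Fin r → Fin b) :
    (M.submatrix id cols).rank ≤ M.rank := by
  rw [Matrix.rank_eq_finrank_span_cols, Matrix.rank_eq_finrank_span_cols]
  apply Submodule.finrank_mono
  apply Submodule.span_mono
  rintro _ ⟨i, rfl⟩
  exact ⟨cols i, rfl⟩

lemma rank_submatrix_row_le {a b r : ℕ} (M : Matrix (Fin a) (Fin b) K) (rows : Fin r → Fin a) :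
    (M.submatrix rows id).rank ≤ M.rank := by
  have h1 : (M.submatrix rows id) = (Mᵀ.submatrix id rows)ᵀ := rfl
  rw [h1, Matrix.rank_transpose, ← Matrix.rank_transpose M]
  exact rank_submatrix_col_le Mᵀ rows

lemma le_rank_of_minor {a b r : ℕ} (M : Matrix (Fin a) (Fin b) K)
    (rows : Fin r → Fin a) (cols : Fin r → Fin b) (h : (M.submatrix rows cols).det ≠ 0) :
    r ≤ M.rank := by
  have hu : IsUnit (M.submatrix rows cols) :=
    (Matrix.isUnit_iff_isUnit_det _).mpr (isUnit_iff_ne_zero.mpr h)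
  have h1 : (M.submatrix rows cols).rank = r := by
    simpa using Matrix.rank_of_isUnit _ hu
  calc r = (M.submatrix rows cols).rank := h1.symm
    _ ≤ (M.submatrix rows id).rank := by
        have h2 : M.submatrix rows cols = (M.submatrix rows id).submatrix id cols := rfl
        rw [h2]; exact rank_submatrix_col_le _ _
    _ ≤ M.rank := rank_submatrix_row_le M rows

lemma rank_map_le_rank_map {S K2 : Type*} [CommRing S] [Field K2]
    (f : S →+* K) (g : S →+* K2) (hfg : ∀ x, f x ≠ 0 → g x ≠ 0)
    {a b : ℕ} (M : Matrix (Fin a) (Fin b) S) : (M.map f).rank ≤ (M.map g).rank := by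
  obtain ⟨rows, cols, hdet⟩ := exists_minor_of_le_rank (M.map f) le_rfl
  apply le_rank_of_minor (M.map g) rows cols
  have h1 : (M.map ⇑f).submatrix rows cols = (M.submatrix rows cols).map ⇑f := rfl
  have h2 : (M.map ⇑g).submatrix rows cols = (M.submatrix rows cols).map ⇑g := rfl
  have h3f : (M.submatrix rows cols).map ⇑f = f.mapMatrix (M.submatrix rows cols) := rfl
  have h3g : (M.submatrix rows cols).map ⇑g = g.mapMatrix (M.submatrix rows cols) := rfl
  rw [h2, h3g, ← RingHom.map_det]
  rw [h1, h3f, ← RingHom.map_det] at hdet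
  exact hfg _ hdet

lemma rank_add_rank_of_exact {a b c : ℕ} (M1 : Matrix (Fin a) (Fin b) K)
    (M2 : Matrix (Fin b) (Fin c) K)
    (h : LinearMap.ker M1.mulVecLin = LinearMap.range M2.mulVecLin) :
    M1.rank + M2.rank = b := by
  have h1 := LinearMap.finrank_range_add_finrank_ker M1.mulVecLin
  rw [h] at h1
  simpa [Matrix.rank, add_comm] using h1

lemma exact_of_rank_add_rank {a b c : ℕ} (M1 : Matrix (Fin a) (Fin b) K)
    (M2 : Matrix (Fin b) (Fin c) K)
    (hle : LinearMap.range M2.mulVecLin ≤ LinearMap.ker M1.mulVecLin)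
    (h : M1.rank + M2.rank = b) :
    LinearMap.ker M1.mulVecLin = LinearMap.range M2.mulVecLin := by
  symm
  apply Submodule.eq_of_le_of_finrank_le hle
  have h1 := LinearMap.finrank_range_add_finrank_ker M1.mulVecLin
  have h2 : finrank K (LinearMap.range M2.mulVecLin) = M2.rank := rfl
  have h3 : M1.rank = finrank K (LinearMap.range M1.mulVecLin) := rfl
  rw [h2]
  have h4 : finrank K (Fin b → K) = b := by simp
  omega

end FieldHelpers


lemma range_le_ker_map {S K : Type*} [CommRing S] [CommRing K] (f : S →+* K)
    {a b c : ℕ} (M1 : Matrix (Fin a) (Fin b) S) (M2 : Matrix (Fin b) (Fin c) S)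
    (h : M1 * M2 = 0) :
    LinearMap.range ((M2.map ⇑f).mulVecLin) ≤ LinearMap.ker ((M1.map ⇑f).mulVecLin) := by
  rw [LinearMap.range_le_ker_iff, ← Matrix.mulVecLin_mul, ← Matrix.map_mul, h]
  simp

lemma mul_eq_zero_of_exact {a b c : ℕ} (M1 : Matrix (Fin a) (Fin b) ℤ)
    (M2 : Matrix (Fin b) (Fin c) ℤ)
    (h : LinearMap.ker M1.mulVecLin = LinearMap.range M2.mulVecLin) : M1 * M2 = 0 := by
  ext i j
  have hmem : M2.mulVecLin (Pi.single j 1) ∈ LinearMap.range M2.mulVecLin := ⟨_, rfl⟩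
  rw [← h, LinearMap.mem_ker] at hmem
  have h2 := congrFun hmem i
  simpa [Matrix.mulVecLin_apply, Matrix.mulVec_mulVec, Matrix.mulVec_single,
    Matrix.mul_apply, Matrix.mulVec, dotProduct] using h2

lemma rat_acyclic {a b c : ℕ} (M1 : Matrix (Fin a) (Fin b) ℤ) (M2 : Matrix (Fin b) (Fin c) ℤ)
    (h : LinearMap.ker M1.mulVecLin = LinearMap.range M2.mulVecLin) :
    LinearMap.ker ((M1.map (Int.cast : ℤ → ℚ)).mulVecLin)
      = LinearMap.range ((M2.map (Int.cast : ℤ → ℚ)).mulVecLin) := by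
  have hMM : M1 * M2 = 0 := mul_eq_zero_of_exact M1 M2 h
  refine le_antisymm ?_ ?_
  · intro v hv
    rw [LinearMap.mem_ker, Matrix.mulVecLin_apply] at hv
    obtain ⟨d, hd⟩ := IsLocalization.exist_integer_multiples_of_finite (nonZeroDivisors ℤ) v
    choose u hu using hd
    have hd0 : ((d : ℤ) : ℚ) ≠ 0 := Int.cast_ne_zero.mpr (nonZeroDivisors.coe_ne_zero d)
    have hu' : ∀ i, (u i : ℚ) = ((d : ℤ) : ℚ) * v i := by
      intro i
      have h1 := hu i
      simpa [algebraMap_int_eq, zsmul_eq_mul] using h1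
    have hker : M1.mulVec u = 0 := by
      funext i
      have hcast : ((M1.mulVec u i : ℤ) : ℚ)
          = ((d : ℤ) : ℚ) * ((M1.map (Int.cast : ℤ → ℚ)).mulVec v i) := by
        simp only [Matrix.mulVec, dotProduct, Matrix.map_apply, Int.cast_sum,
          Int.cast_mul, Finset.mul_sum, hu']
        refine Finset.sum_congr rfl fun j _ => by ring
      rw [hv, Pi.zero_apply, mul_zero] at hcast
      exact_mod_cast hcast
    have humem : u ∈ LinearMap.ker M1.mulVecLin := by
      simpa [Matrix.mulVecLin_apply] using hker
    rw [h] at humem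
    obtain ⟨w, hw⟩ := humem
    refine ⟨(((d : ℤ) : ℚ))⁻¹ • fun j => ((w j : ℤ) : ℚ), ?_⟩
    rw [Matrix.mulVecLin_apply, Matrix.mulVec_smul]
    funext i
    have hwi : (M2.map (Int.cast : ℤ → ℚ)).mulVec (fun j => ((w j : ℤ) : ℚ)) i
        = ((M2.mulVec w i : ℤ) : ℚ) := by
      simp [Matrix.mulVec, dotProduct]
    have hui : M2.mulVec w i = u i := by
      have := congrFun hw i
      simpa [Matrix.mulVecLin_apply] using this
    rw [Pi.smul_apply, hwi, hui, hu' i, smul_eq_mul, inv_mul_cancel_left₀ hd0]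
  · exact range_le_ker_map (Int.castRingHom ℚ) M1 M2 hMM

/-- if a bounded based chain complex of finitely generated free
`ℤ[A]`-modules (given by its matrices of differentials `D i`) becomes acyclic after
applying the augmentation `ε : ℤ[A] → ℤ`, then it is acyclic after applying the
homomorphism `φ_Q : ℤ[A] → Q` induced by `φ : A → G ⊆ R^×`, where `Q = Frac(R)`. -/
theorem stmt11 (R : Type) [CommRing R] [IsDomain R]
    (εR : R →+* ℤ) (σ : R →+* R) (hσ : ∀ r, σ (σ r) = r)
    (G : Subgroup Rˣ) (hεRG : ∀ u : Rˣ, u ∈ G → εR (u : R) = 1)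
    (Q : Type) [Field Q] [Algebra R Q] [IsFractionRing R Q]
    (A : Type) [CommGroup A] (φ : A →* Rˣ) (hφ : ∀ a, φ a ∈ G)
    -- the augmentation of `ℤ[A]`:
    (ε : MonoidAlgebra ℤ A →+* ℤ) (hε : ∀ a : A, ε (MonoidAlgebra.of ℤ A a) = 1)
    -- the ring homomorphism `φ_Q : ℤ[A] → Q` induced by `φ`:
    (φQ : MonoidAlgebra ℤ A →+* Q)
    (hφQ : ∀ a : A, φQ (MonoidAlgebra.of ℤ A a) = algebraMap R Q ((φ a : Rˣ) : R))
    -- a bounded chain complex of f.g. free based `ℤ[A]`-modules, via its differentials: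
    (n : ℤ → ℕ) (N : ℕ) (hbdd : ∀ i : ℤ, (N : ℤ) < |i| → n i = 0)
    (D : ∀ i : ℤ, Matrix (Fin (n i)) (Fin (n (i + 1))) (MonoidAlgebra ℤ A))
    (hDD : ∀ i : ℤ, D i * D (i + 1) = 0)
    -- `ℤ ⊗_{ℤ[A]} C` is acyclic:
    (hZacyclic : ∀ i : ℤ,
      LinearMap.ker (Matrix.mulVecLin ((D i).map ε)) =
        LinearMap.range (Matrix.mulVecLin ((D (i + 1)).map ε))) :
    -- then `Q ⊗_{ℤ[A]} C` is acyclic: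
    ∀ i : ℤ,
      LinearMap.ker (Matrix.mulVecLin ((D i).map φQ)) =
        LinearMap.range (Matrix.mulVecLin ((D (i + 1)).map φQ)) := by
  classical
  -- the ring homomorphism `ℤ[A] → R` induced by `φ`
  set φR : MonoidAlgebra ℤ A →ₐ[ℤ] R :=
    MonoidAlgebra.lift ℤ R A ((Units.coeHom R).comp φ) with hφRdef
  have hφR : ∀ a : A, φR (MonoidAlgebra.of ℤ A a) = ((φ a : Rˣ) : R) := fun a => by
    simp [hφRdef]
  have h1 : εR.toIntAlgHom.comp φR = ε.toIntAlgHom := by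
    apply MonoidAlgebra.algHom_ext
    intro a
    have ha : MonoidAlgebra.single (a : A) (1 : ℤ) = MonoidAlgebra.of ℤ A a :=
      rfl
    rw [ha]
    show εR (φR (MonoidAlgebra.of ℤ A a)) = ε (MonoidAlgebra.of ℤ A a)
    rw [hφR a, hε a, hεRG _ (hφ a)]
    exact Subsingleton.elim _ _
  have h2 : (algebraMap R Q).toIntAlgHom.comp φR = φQ.toIntAlgHom := by
    apply MonoidAlgebra.algHom_ext
    intro a
    have ha : MonoidAlgebra.single (a : A) (1 : ℤ) = MonoidAlgebra.of ℤ A a :=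
      rfl
    rw [ha]
    show algebraMap R Q (φR (MonoidAlgebra.of ℤ A a)) = φQ (MonoidAlgebra.of ℤ A a)
    rw [hφR a, hφQ a]
    exact Subsingleton.elim _ _
  -- the key nonvanishing statement
  have hkey : ∀ x : MonoidAlgebra ℤ A, ε x ≠ 0 → φQ x ≠ 0 := by
    intro x hx h0
    have hεφ : εR (φR x) = ε x := DFunLike.congr_fun h1 x
    have hQφ : algebraMap R Q (φR x) = φQ x := DFunLike.congr_fun h2 x
    have hR0 : φR x = 0 := by
      apply IsFractionRing.injective R Q
      rw [hQφ, h0, map_zero]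
    rw [← hεφ, hR0, map_zero] at hx
    exact hx rfl
  -- the rational version of the augmentation
  set f : MonoidAlgebra ℤ A →+* ℚ := (Int.castRingHom ℚ).comp ε with hfdef
  have hkeyf : ∀ x : MonoidAlgebra ℤ A, f x ≠ 0 → φQ x ≠ 0 := by
    intro x hx
    apply hkey
    intro h0
    apply hx
    simp [hfdef, h0]
  have hmapf : ∀ i : ℤ, (D i).map ⇑f = ((D i).map ⇑ε).map (Int.cast : ℤ → ℚ) := by
    intro i
    rw [Matrix.map_map]
    rfl
  -- exactness over ℚ
  have hQexact : ∀ i : ℤ,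
      LinearMap.ker ((D i).map ⇑f).mulVecLin
        = LinearMap.range ((D (i + 1)).map ⇑f).mulVecLin := by
    intro i
    rw [hmapf i, hmapf (i + 1)]
    exact rat_acyclic _ _ (hZacyclic i)
  have hrQ : ∀ i : ℤ, ((D i).map ⇑f).rank + ((D (i + 1)).map ⇑f).rank = n (i + 1) :=
    fun i => rank_add_rank_of_exact _ _ (hQexact i)
  -- the product of consecutive `φQ`-differentials vanishes
  have hMM : ∀ i : ℤ, (D i).map ⇑φQ * (D (i + 1)).map ⇑φQ = 0 := by
    intro i
    rw [← Matrix.map_mul, hDD i]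
    exact Matrix.map_zero _ (map_zero φQ)
  have hup : ∀ i : ℤ, ((D i).map ⇑φQ).rank + ((D (i + 1)).map ⇑φQ).rank ≤ n (i + 1) := by
    intro i
    simpa using Matrix.rank_add_rank_le_card_of_mul_eq_zero (hMM i)
  have hlow : ∀ i : ℤ, ((D i).map ⇑f).rank ≤ ((D i).map ⇑φQ).rank :=
    fun i => rank_map_le_rank_map f φQ hkeyf (D i)
  intro i
  apply exact_of_rank_add_rank _ _ (range_le_ker_map φQ _ _ (hDD i))
  have e1 := hrQ i
  have e2 := hup i
  have e3 := hlow i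
  have e4 := hlow (i + 1)
  omega
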